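/- arXiv:2602.15059 — 4 statements merged into one kernel-verified Lean document; each statement's English description precedes it below -/
import Mathlib

section
/- Let H be a real inner product space, ν > 0, Δt > 0 and θ ∈ [1/2, 1]. Let A : H →ₗ[ℝ] H satisfy ⟪A v, v⟫ ≥ 0 for all v (viscous coercivity), let B : H → H satisfy ⟪B v, v⟫ = 0 for all v (discrete skew-symmetry), and let C : H → H satisfy ⟪C v, v⟫ ≥ 0 for all v (closure dissipativity). Suppose u, u⁺ ∈ H satisfy the certified θ-scheme step (1/Δt)·(u⁺ − u) + ν·A uθ + B uθ + C uθ = f with uθ := θ·u⁺ + (1−θ)·u and f ∈ H. Then the discrete energy inequality holds: (1/2)‖u⁺‖² − (1/2)‖u‖² + ν·Δt·⟪A uθ, uθ⟫ + Δt·⟪C uθ, uθ⟫ ≤ Δt·⟪f, uθ⟫. (ROM energy stability, per-step form.) -/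
open RealInnerProductSpace

/-- ROM energy stability, per-step form: one step of the certified θ-scheme with
viscous coercivity, skew-symmetric convection and dissipative closure satisfies the
discrete energy inequality. -/
theorem rom_energy_stability_step {H : Type*} [NormedAddCommGroup H]
    [InnerProductSpace ℝ H]
    (ν Δt θ : ℝ) (hν : 0 < ν) (hΔt : 0 < Δt) (hθ₁ : 1 / 2 ≤ θ) (hθ₂ : θ ≤ 1)
    (A : H →ₗ[ℝ] H) (B C : H → H)
    (hA : ∀ v : H, 0 ≤ ⟪A v, v⟫)
    (hB : ∀ v : H, ⟪B v, v⟫ = 0)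
    (hC : ∀ v : H, 0 ≤ ⟪C v, v⟫)
    (u uplus f uθ : H)
    (huθ : uθ = θ • uplus + (1 - θ) • u)
    (hstep : (1 / Δt) • (uplus - u) + ν • A uθ + B uθ + C uθ = f) :
    (1 / 2) * ‖uplus‖ ^ 2 - (1 / 2) * ‖u‖ ^ 2
      + ν * Δt * ⟪A uθ, uθ⟫ + Δt * ⟪C uθ, uθ⟫ ≤ Δt * ⟪f, uθ⟫ := by
  have key := congrArg (fun w : H => ⟪w, uθ⟫) hstep
  simp only [inner_add_left, real_inner_smul_left, hB uθ] at key
  -- expand ⟪uplus - u, uθ⟫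
  have hexp : ⟪uplus - u, uθ⟫
      = θ * ‖uplus‖ ^ 2 - (1 - θ) * ‖u‖ ^ 2 + (1 - 2 * θ) * ⟪uplus, u⟫ := by
    rw [huθ, inner_sub_left, inner_add_right, inner_add_right,
      real_inner_smul_right, real_inner_smul_right, real_inner_smul_right,
      real_inner_smul_right, real_inner_self_eq_norm_sq, real_inner_self_eq_norm_sq,
      real_inner_comm u uplus]
    ring
  rw [hexp] at key
  have hnorm : 0 ≤ ‖uplus - u‖ ^ 2 := by positivity
  have hns : ‖uplus - u‖ ^ 2 = ‖uplus‖ ^ 2 - 2 * ⟪uplus, u⟫ + ‖u‖ ^ 2 := by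
    rw [← real_inner_self_eq_norm_sq, inner_sub_sub_self,
      real_inner_self_eq_norm_sq, real_inner_self_eq_norm_sq, real_inner_comm u uplus]
    ring
  have hne : Δt ≠ 0 := hΔt.ne'
  field_simp at key
  have hA' := hA uθ
  have hC' := hC uθ
  nlinarith [mul_pos hν hΔt, mul_nonneg hΔt.le hC', mul_nonneg (mul_pos hν hΔt).le hA',
    mul_nonneg (by linarith : (0:ℝ) ≤ θ - 1/2) hnorm]
end

section
/- Let H be a real inner product space, ν > 0, Δt > 0, θ ∈ [1/2, 1], and 0 < ε < ν. Let A : H →ₗ[ℝ] H satisfy ⟪A v, v⟫ ≥ 0 for all v, let B : H → H satisfy ⟪B v, v⟫ = 0 for all v, and let C : H → H satisfy ⟪C v, v⟫ ≥ 0 for all v. Suppose u, u⁺ ∈ H satisfy (1/Δt)·(u⁺ − u) + ν·A uθ + B uθ + C uθ = f with uθ := θ·u⁺ + (1−θ)·u and f ∈ H, and suppose there exists F ≥ 0 such that ⟪f, uθ⟫ ≤ F·√(⟪A uθ, uθ⟫) (dual-norm bound on the forcing). Then (1/2)‖u⁺‖² − (1/2)‖u‖² + (ν − ε)·Δt·⟪A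 uθ, uθ⟫ ≤ Δt·F²/(4ε). (ROM energy stability after Young's inequality.) -/
open RealInnerProductSpace

/-- ROM energy stability after Young's inequality: with a dual-norm bound on the
forcing, the certified θ-scheme step satisfies the discrete energy inequality with
reduced viscosity coefficient `ν - ε`. -/
theorem rom_energy_stability_young {H : Type*} [NormedAddCommGroup H]
    [InnerProductSpace ℝ H]
    (ν Δt θ ε : ℝ) (hν : 0 < ν) (hΔt : 0 < Δt) (hθ₁ : 1 / 2 ≤ θ) (hθ₂ : θ ≤ 1)
    (hε : 0 < ε) (hεν : ε < ν)
    (A : H →ₗ[ℝ] H) (B C : H → H)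
    (hA : ∀ v : H, 0 ≤ ⟪A v, v⟫)
    (hB : ∀ v : H, ⟪B v, v⟫ = 0)
    (hC : ∀ v : H, 0 ≤ ⟪C v, v⟫)
    (u uplus f uθ : H)
    (huθ : uθ = θ • uplus + (1 - θ) • u)
    (hstep : (1 / Δt) • (uplus - u) + ν • A uθ + B uθ + C uθ = f)
    (F : ℝ) (hF : 0 ≤ F)
    (hforce : ⟪f, uθ⟫ ≤ F * Real.sqrt ⟪A uθ, uθ⟫) :
    (1 / 2) * ‖uplus‖ ^ 2 - (1 / 2) * ‖u‖ ^ 2 + (ν - ε) * Δt * ⟪A uθ, uθ⟫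
      ≤ Δt * F ^ 2 / (4 * ε) := by
  set a : ℝ := ⟪A uθ, uθ⟫ with ha_def
  have ha : 0 ≤ a := hA uθ
  -- Young's inequality
  have hyoung : F * Real.sqrt a ≤ ε * a + F ^ 2 / (4 * ε) := by
    have hs := Real.sq_sqrt ha
    have h0 := sq_nonneg (2 * ε * Real.sqrt a - F)
    have hε' : (0:ℝ) < 4 * ε := by linarith
    have key : (2 * ε * Real.sqrt a - F) ^ 2
        = 4 * ε ^ 2 * (Real.sqrt a ^ 2) - 4 * ε * F * Real.sqrt a + F ^ 2 := by
      ring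
    rw [hs] at key
    rw [key] at h0
    have expand : (4 * ε ^ 2 * a - 4 * ε * F * Real.sqrt a + F ^ 2) / (4 * ε)
        = ε * a - F * Real.sqrt a + F ^ 2 / (4 * ε) := by
      field_simp
    have hdiv := div_nonneg h0 hε'.le
    rw [expand] at hdiv
    linarith
  -- inner product of the step equation with uθ
  have hin : ⟪(1 / Δt) • (uplus - u) + ν • A uθ + B uθ + C uθ, uθ⟫ = ⟪f, uθ⟫ := by
    rw [hstep]
  rw [inner_add_left, inner_add_left, inner_add_left, real_inner_smul_left,
    real_inner_smul_left, hB uθ] at hin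
  have hCθ := hC uθ
  -- lower bound for ⟪uplus - u, uθ⟫
  have hkey : (1 / 2) * ‖uplus‖ ^ 2 - (1 / 2) * ‖u‖ ^ 2 ≤ ⟪uplus - u, uθ⟫ := by
    have hexp : ⟪uplus - u, uθ⟫ =
        θ * ‖uplus‖ ^ 2 + (1 - 2 * θ) * ⟪uplus, u⟫ - (1 - θ) * ‖u‖ ^ 2 := by
      rw [huθ, inner_add_right, real_inner_smul_right, real_inner_smul_right,
        inner_sub_left, inner_sub_left, real_inner_self_eq_norm_sq,
        real_inner_self_eq_norm_sq, real_inner_comm u uplus]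
      ring
    have hsq : (0:ℝ) ≤ ‖uplus‖ ^ 2 - 2 * ⟪uplus, u⟫ + ‖u‖ ^ 2 := by
      have := real_inner_self_nonneg (x := uplus - u)
      rw [inner_sub_left, inner_sub_right, inner_sub_right,
        real_inner_self_eq_norm_sq, real_inner_self_eq_norm_sq,
        real_inner_comm u uplus] at this
      have hcomm : ⟪uplus, u⟫ = ⟪u, uplus⟫ := real_inner_comm _ _
      linarith
    rw [hexp]
    nlinarith [hsq]
  -- combine
  have hforce' : ⟪f, uθ⟫ ≤ ε * a + F ^ 2 / (4 * ε) := le_trans hforce hyoung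
  have h1 : (1 / Δt) * ⟪uplus - u, uθ⟫ + ν * a ≤ ε * a + F ^ 2 / (4 * ε) := by
    linarith [hin, hCθ, hforce']
  have h2 : ⟪uplus - u, uθ⟫ + Δt * (ν * a) ≤ Δt * (ε * a) + Δt * (F ^ 2 / (4 * ε)) := by
    have h3 := mul_le_mul_of_nonneg_left h1 (le_of_lt hΔt)
    have h4 : Δt * (1 / Δt * ⟪uplus - u, uθ⟫) = ⟪uplus - u, uθ⟫ := by
      field_simp
    nlinarith [h3]
  have heq : Δt * (F ^ 2 / (4 * ε)) = Δt * F ^ 2 / (4 * ε) := by ring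
  nlinarith [hkey, h2]
end

section
/- Let ν > 0, L ≥ 0 and T > 0. Let E : ℝ → ℝ be differentiable on [0,T] with E(t) ≥ 0 for all t ∈ [0,T], and let d, r : ℝ → ℝ be continuous and nonnegative on [0,T]. Suppose the error-energy differential inequality holds for all t ∈ [0,T]: E'(t) + 2ν·d(t)² ≤ 2·r(t)·d(t) + 2L·√(E(t))·d(t). Then for every t ∈ [0,T]: E(t) + ν·∫₀ᵗ d(s)² ds ≤ exp(2L²·t/ν)·( E(0) + (2/ν)·∫₀ᵗ r(s)² ds ). (A posteriori error bound: the modeling error in the energy norm is controlled by the initial mismatch and the time-integrated squared residual, with a Grönwall factor explicit in ν, L and t.) -/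
open MeasureTheory intervalIntegral Set

/-- A posteriori error bound: the error-energy differential inequality, obtained from
the tested error equation via skew-symmetry of convection and dissipativity of the
closure, implies control of the error in the energy norm by the initial mismatch and
the time-integrated squared residual, with an explicit Grönwall factor. -/
theorem a_posteriori_error_bound
    (ν L T : ℝ) (hν : 0 < ν) (hL : 0 ≤ L) (hT : 0 < T)
    (E E' d r : ℝ → ℝ)
    (hE : ∀ t ∈ Set.Icc (0 : ℝ) T, HasDerivAt E (E' t) t)
    (hEnn : ∀ t ∈ Set.Icc (0 : ℝ) T, 0 ≤ E t)
    (hd : ContinuousOn d (Set.Icc (0 : ℝ) T))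
    (hdnn : ∀ t ∈ Set.Icc (0 : ℝ) T, 0 ≤ d t)
    (hr : ContinuousOn r (Set.Icc (0 : ℝ) T))
    (hrnn : ∀ t ∈ Set.Icc (0 : ℝ) T, 0 ≤ r t)
    (hineq : ∀ t ∈ Set.Icc (0 : ℝ) T,
      E' t + 2 * ν * (d t) ^ 2
        ≤ 2 * (r t) * (d t) + 2 * L * Real.sqrt (E t) * (d t)) :
    ∀ t ∈ Set.Icc (0 : ℝ) T,
      E t + ν * ∫ s in (0 : ℝ)..t, (d s) ^ 2
        ≤ Real.exp (2 * L ^ 2 * t / ν)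
          * (E 0 + (2 / ν) * ∫ s in (0 : ℝ)..t, (r s) ^ 2) := by
  obtain ⟨K, hK⟩ : ∃ K : ℝ, K = 2 * L ^ 2 / ν := ⟨_, rfl⟩
  have hK0 : 0 ≤ K := by rw [hK]; positivity
  have hU : Set.uIcc (0 : ℝ) T = Set.Icc 0 T := Set.uIcc_of_le hT.le
  -- continuous integrands
  have hd2 : ContinuousOn (fun s => d s ^ 2) (Set.Icc (0:ℝ) T) := hd.pow 2
  have hr2 : ContinuousOn (fun s => r s ^ 2) (Set.Icc (0:ℝ) T) := hr.pow 2
  have hexpc : Continuous (fun s : ℝ => Real.exp (-K * s)) :=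
    Real.continuous_exp.comp (continuous_const.mul continuous_id)
  have hg : ContinuousOn (fun s => Real.exp (-K * s) * r s ^ 2) (Set.Icc (0:ℝ) T) :=
    hexpc.continuousOn.mul hr2
  have hEc : ContinuousOn E (Set.Icc (0:ℝ) T) :=
    fun x hx => (hE x hx).continuousAt.continuousWithinAt
  -- interval integrability up to any x in Icc 0 T
  have hsub : ∀ x ∈ Set.Icc (0:ℝ) T, Set.uIcc (0:ℝ) x ⊆ Set.Icc 0 T := by
    intro x hx
    rw [Set.uIcc_of_le hx.1]
    exact Set.Icc_subset_Icc le_rfl hx.2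
  have hint_d : ∀ x ∈ Set.Icc (0:ℝ) T,
      IntervalIntegrable (fun s => d s ^ 2) volume 0 x :=
    fun x hx => (hd2.mono (hsub x hx)).intervalIntegrable
  have hint_r : ∀ x ∈ Set.Icc (0:ℝ) T,
      IntervalIntegrable (fun s => r s ^ 2) volume 0 x :=
    fun x hx => (hr2.mono (hsub x hx)).intervalIntegrable
  have hint_g : ∀ x ∈ Set.Icc (0:ℝ) T,
      IntervalIntegrable (fun s => Real.exp (-K * s) * r s ^ 2) volume 0 x :=
    fun x hx => (hg.mono (hsub x hx)).intervalIntegrable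
  -- the auxiliary functions
  obtain ⟨G, hGdef⟩ : ∃ G : ℝ → ℝ,
      G = fun t => E t + ν * ∫ s in (0:ℝ)..t, d s ^ 2 := ⟨_, rfl⟩
  obtain ⟨H, hHdef⟩ : ∃ H : ℝ → ℝ, H = fun t => Real.exp (-K * t) * G t
      - (2 / ν) * ∫ s in (0:ℝ)..t, Real.exp (-K * s) * r s ^ 2 := ⟨_, rfl⟩
  -- continuity of H on Icc
  have hPd : ContinuousOn (fun x => ∫ s in (0:ℝ)..x, d s ^ 2) (Set.Icc (0:ℝ) T) := by
    have := continuousOn_primitive_interval (μ := volume) (a := (0:ℝ)) (b := T)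
      (f := fun s => d s ^ 2) (by rw [hU]; exact hd2.integrableOn_Icc)
    rwa [hU] at this
  have hPg : ContinuousOn (fun x => ∫ s in (0:ℝ)..x, Real.exp (-K * s) * r s ^ 2)
      (Set.Icc (0:ℝ) T) := by
    have := continuousOn_primitive_interval (μ := volume) (a := (0:ℝ)) (b := T)
      (f := fun s => Real.exp (-K * s) * r s ^ 2) (by rw [hU]; exact hg.integrableOn_Icc)
    rwa [hU] at this
  have hHc : ContinuousOn H (Set.Icc (0:ℝ) T) := by
    rw [hHdef, hGdef]
    exact ((hexpc.continuousOn.mul (hEc.add (continuousOn_const.mul hPd))).sub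
      (continuousOn_const.mul hPg))
  -- derivative of H at interior points
  have hHder : ∀ x ∈ Set.Ioo (0:ℝ) T, HasDerivAt H
      (Real.exp (-K * x) * (-K) * G x + Real.exp (-K * x) * (E' x + ν * d x ^ 2)
        - (2 / ν) * (Real.exp (-K * x) * r x ^ 2)) x := by
    intro x hx
    have hxI : x ∈ Set.Icc (0:ℝ) T := Set.Ioo_subset_Icc_self hx
    have hmemnhds : Set.Icc (0:ℝ) T ∈ nhds x := Icc_mem_nhds hx.1 hx.2
    have hder_d : HasDerivAt (fun u => ∫ s in (0:ℝ)..u, d s ^ 2) (d x ^ 2) x :=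
      integral_hasDerivAt_right (hint_d x hxI)
        (ContinuousOn.stronglyMeasurableAtFilter isOpen_Ioo (hd2.mono Set.Ioo_subset_Icc_self) x hx)
        ((hd2.continuousAt hmemnhds))
    have hder_g : HasDerivAt (fun u => ∫ s in (0:ℝ)..u, Real.exp (-K * s) * r s ^ 2)
        (Real.exp (-K * x) * r x ^ 2) x :=
      integral_hasDerivAt_right (hint_g x hxI)
        (ContinuousOn.stronglyMeasurableAtFilter isOpen_Ioo (hg.mono Set.Ioo_subset_Icc_self) x hx)
        ((hg.continuousAt hmemnhds))
    have hexp' : HasDerivAt (fun t : ℝ => Real.exp (-K * t)) (Real.exp (-K * x) * (-K)) x := by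
      have : HasDerivAt (fun t : ℝ => -K * t) (-K) x := by
        simpa using (hasDerivAt_id x).const_mul (-K)
      exact this.exp
    have hG' : HasDerivAt G (E' x + ν * d x ^ 2) x := by
      rw [hGdef]; exact (hE x hxI).add (hder_d.const_mul ν)
    have := (hexp'.mul hG').sub (hder_g.const_mul (2 / ν))
    rw [hHdef]
    convert this using 1
    all_goals rfl
  -- the derivative is nonpositive
  have hHder_le : ∀ x ∈ Set.Ioo (0:ℝ) T,
      Real.exp (-K * x) * (-K) * G x + Real.exp (-K * x) * (E' x + ν * d x ^ 2)
        - (2 / ν) * (Real.exp (-K * x) * r x ^ 2) ≤ 0 := by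
    intro x hx
    have hxI : x ∈ Set.Icc (0:ℝ) T := Set.Ioo_subset_Icc_self hx
    have he : Real.sqrt (E x) ^ 2 = E x := Real.sq_sqrt (hEnn x hxI)
    have h1 := hineq x hxI
    have key : (E' x + ν * d x ^ 2) * ν ≤ 2 * L ^ 2 * E x + 2 * r x ^ 2 := by
      nlinarith [sq_nonneg (ν * d x - 2 * r x),
        sq_nonneg (ν * d x - 2 * L * Real.sqrt (E x)),
        mul_le_mul_of_nonneg_left h1 hν.le, he]
    have hb : E' x + ν * d x ^ 2 ≤ K * E x + (2 / ν) * r x ^ 2 := by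
      rw [hK, div_mul_eq_mul_div, div_mul_eq_mul_div, ← add_div, le_div_iff₀ hν]
      linarith
    have hInn : 0 ≤ ∫ s in (0:ℝ)..x, d s ^ 2 :=
      intervalIntegral.integral_nonneg hx.1.le (fun u _ => sq_nonneg _)
    have hGE : E x ≤ G x := by
      have hnn := mul_nonneg hν.le hInn
      rw [hGdef]
      dsimp only
      linarith
    have hbr : E' x + ν * d x ^ 2 ≤ K * G x + (2 / ν) * r x ^ 2 := by
      have h2 := mul_le_mul_of_nonneg_left hGE hK0
      calc E' x + ν * d x ^ 2 ≤ K * E x + 2 / ν * r x ^ 2 := hb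
        _ ≤ K * G x + 2 / ν * r x ^ 2 := by linarith
    have hepos : (0:ℝ) < Real.exp (-K * x) := Real.exp_pos _
    nlinarith [mul_le_mul_of_nonneg_left hbr hepos.le]
  -- H is antitone on Icc
  have hAnti : AntitoneOn H (Set.Icc (0:ℝ) T) := by
    apply antitoneOn_of_deriv_nonpos (convex_Icc 0 T) hHc
    · intro x hx
      rw [interior_Icc] at hx
      exact ((hHder x hx).differentiableAt).differentiableWithinAt
    · intro x hx
      rw [interior_Icc] at hx
      rw [(hHder x hx).deriv]
      exact hHder_le x hx
  -- conclude
  intro t ht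
  have h0I : (0:ℝ) ∈ Set.Icc (0:ℝ) T := ⟨le_rfl, hT.le⟩
  have hHt : H t ≤ H 0 := hAnti h0I ht ht.1
  have hH0 : H 0 = E 0 := by
    rw [hHdef, hGdef]
    simp
  have hHt' : Real.exp (-K * t) * G t
      ≤ E 0 + (2 / ν) * ∫ s in (0:ℝ)..t, Real.exp (-K * s) * r s ^ 2 := by
    have := hHt
    rw [hH0] at this
    rw [hHdef] at this
    simp only at this
    linarith
  have hmono : (∫ s in (0:ℝ)..t, Real.exp (-K * s) * r s ^ 2)
      ≤ ∫ s in (0:ℝ)..t, r s ^ 2 := by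
    apply intervalIntegral.integral_mono_on ht.1 (hint_g t ht) (hint_r t ht)
    intro s hs
    have h1 : Real.exp (-K * s) ≤ 1 := by
      apply Real.exp_le_one_iff.mpr
      have : 0 ≤ K * s := mul_nonneg hK0 hs.1
      linarith
    exact mul_le_of_le_one_left (sq_nonneg _) h1
  have h2ν : (0:ℝ) ≤ 2 / ν := by positivity
  have hfin : Real.exp (-K * t) * G t
      ≤ E 0 + (2 / ν) * ∫ s in (0:ℝ)..t, r s ^ 2 := by
    have := mul_le_mul_of_nonneg_left hmono h2ν
    linarith
  have hfin2 := mul_le_mul_of_nonneg_left hfin (Real.exp_pos (K * t)).le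
  have hcancel : Real.exp (K * t) * (Real.exp (-K * t) * G t) = G t := by
    rw [← mul_assoc, ← Real.exp_add]
    simp
  rw [hcancel] at hfin2
  have hKt : 2 * L ^ 2 * t / ν = K * t := by rw [hK]; ring
  rw [hKt]
  rw [hGdef] at hfin2
  exact hfin2
end

section
/- Let V be a real inner product space, let a : V → V → ℝ be a symmetric bilinear form, let ρ > 0, Δt > 0 and F ∈ ℝ. Suppose η, η⁺, w, w⁺ ∈ V satisfy the implicit elastodynamics step: η⁺ = η + Δt·w⁺ and ρ·⟪w⁺ − w, w⁺⟫ + Δt·a(η⁺, w⁺) = Δt·F. Then the discrete structure energy identity holds: (ρ/2)‖w⁺‖² + (1/2)·a(η⁺, η⁺) − (ρ/2)‖w‖² − (1/2)·a(η, η) + (ρ/2)‖w⁺ − w‖² + (1/2)·a(η⁺ − η, η⁺ − η) = Δt·F. In particular, if a is positive semidefinite then the structure energy (ρ/2)‖w⁺‖² + (1/2)a(η⁺,η⁺) increases by at most Δt·F. (Structure-step energy identity in the discrete coupled FSI energy estimate.) -/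
open RealInnerProductSpace

/-- Structure-step energy identity in the discrete coupled FSI energy estimate: the
implicit elastodynamics step satisfies an exact discrete energy balance, and if the
elastic form is positive semidefinite the structure energy increases by at most
`Δt·F`. -/
theorem fsi_structure_energy_identity {V : Type*} [NormedAddCommGroup V]
    [InnerProductSpace ℝ V]
    (a : V →ₗ[ℝ] V →ₗ[ℝ] ℝ) (hsymm : ∀ x y : V, a x y = a y x)
    (ρ Δt F : ℝ) (hρ : 0 < ρ) (hΔt : 0 < Δt)
    (η ηplus w wplus : V)
    (hkin : ηplus = η + Δt • wplus)
    (hstep : ρ * ⟪wplus - w, wplus⟫ + Δt * a ηplus wplus = Δt * F) :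
    ((ρ / 2) * ‖wplus‖ ^ 2 + (1 / 2) * a ηplus ηplus
        - (ρ / 2) * ‖w‖ ^ 2 - (1 / 2) * a η η
        + (ρ / 2) * ‖wplus - w‖ ^ 2 + (1 / 2) * a (ηplus - η) (ηplus - η) = Δt * F)
    ∧ ((∀ v : V, 0 ≤ a v v) →
        (ρ / 2) * ‖wplus‖ ^ 2 + (1 / 2) * a ηplus ηplus
          ≤ (ρ / 2) * ‖w‖ ^ 2 + (1 / 2) * a η η + Δt * F) := by
  have hd : ηplus - η = Δt • wplus := by rw [hkin]; abel
  have h1 : ⟪wplus - w, wplus⟫ = (‖wplus‖ ^ 2 - ‖w‖ ^ 2 + ‖wplus - w‖ ^ 2) / 2 := by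
    have hn : ‖wplus - w‖ ^ 2 = ‖wplus‖ ^ 2 - 2 * ⟪wplus, w⟫ + ‖w‖ ^ 2 :=
      norm_sub_sq_real wplus w
    have hs : ⟪wplus - w, wplus⟫ = ⟪wplus, wplus⟫ - ⟪w, wplus⟫ := inner_sub_left _ _ _
    have hsw : ⟪wplus, wplus⟫ = ‖wplus‖ ^ 2 := real_inner_self_eq_norm_sq wplus
    have hc : ⟪w, wplus⟫ = ⟪wplus, w⟫ := real_inner_comm _ _
    rw [hs, hsw, hc]; linarith
  have h2 : Δt * a ηplus wplus = a ηplus (ηplus - η) := by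
    rw [hd]; simp [mul_comm]
  have h3 : a (ηplus - η) (ηplus - η)
      = a ηplus ηplus - 2 * a ηplus η + a η η := by
    simp only [map_sub, LinearMap.sub_apply]
    rw [hsymm η ηplus]; ring
  have h4 : a ηplus (ηplus - η) = a ηplus ηplus - a ηplus η := by
    simp
  have key : (ρ / 2) * ‖wplus‖ ^ 2 + (1 / 2) * a ηplus ηplus
        - (ρ / 2) * ‖w‖ ^ 2 - (1 / 2) * a η η
        + (ρ / 2) * ‖wplus - w‖ ^ 2 + (1 / 2) * a (ηplus - η) (ηplus - η) = Δt * F := by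
    rw [h3]
    rw [h1, h2, h4] at hstep
    linarith
  refine ⟨key, fun hpos => ?_⟩
  have hA := hpos (ηplus - η)
  have hB : (0:ℝ) ≤ (ρ / 2) * ‖wplus - w‖ ^ 2 :=
    mul_nonneg (by linarith) (sq_nonneg _)
  linarith
end
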